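/- Let 𝒰 ⊆ (ℤ[1/p]_{≥0})^r be upward closed with the 'no gaps' property of the previous statement, and call c/q a critical point if c/q ∈ 𝒰 and every strictly smaller point is in the complement 𝒧. Then for a ∈ ℤ_{≥0}^r and q a power of p, a/q ∈ 𝒰 if and only if there exists a critical point c/q (same denominator q allowed) with c ≤ a componentwise. -/

import Mathlib

/-- Abstract critical-point existence.  With `𝒰 ⊆ (ℤ[1/p]_{≥0})^r`
upward closed and satisfying the "no gaps" property of Statement 13, call `c/q` a
critical point if `c/q ∈ 𝒰` and every strictly smaller point is in the complement `𝒧`.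
Then for `a ∈ ℤ_{≥0}^r` and `q = p^e`, `a/q ∈ 𝒰` iff there exists a critical point `c/q`
(with the same denominator `q`) with `c ≤ a` componentwise. -/
theorem stmt_14 (p r : ℕ) (hp : p.Prime) (hr : 0 < r)
    (U : Set (Fin r → ℚ))
    (hdom : ∀ x ∈ U, ∃ (a : Fin r → ℕ) (e : ℕ), ∀ i, x i = (a i : ℚ) / (p : ℚ) ^ e)
    (hup : ∀ x ∈ U, ∀ y : Fin r → ℚ,
      (∃ (a : Fin r → ℕ) (e : ℕ), ∀ i, y i = (a i : ℚ) / (p : ℚ) ^ e) → x ≤ y → y ∈ U)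
    (hgap : ∀ (a : Fin r → ℕ) (e : ℕ) (s : Fin r), 0 < a s →
      (fun i => (a i : ℚ) / (p : ℚ) ^ e) ∈ U →
      (fun i => ((a i : ℚ) - if i = s then 1 else 0) / (p : ℚ) ^ e) ∉ U →
      (fun i => (a i : ℚ) / (p : ℚ) ^ e - if i = s then 1 / (p : ℚ) ^ (e + 1) else 0) ∉ U)
    (a : Fin r → ℕ) (e : ℕ) :
    (fun i => (a i : ℚ) / (p : ℚ) ^ e) ∈ U ↔
      ∃ c : Fin r → ℕ,
        (fun i => (c i : ℚ) / (p : ℚ) ^ e) ∈ U ∧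
        (∀ y : Fin r → ℚ,
          (∃ (b : Fin r → ℕ) (e' : ℕ), ∀ i, y i = (b i : ℚ) / (p : ℚ) ^ e') →
          y ≤ (fun i => (c i : ℚ) / (p : ℚ) ^ e) →
          y ≠ (fun i => (c i : ℚ) / (p : ℚ) ^ e) → y ∉ U) ∧
        ∀ i, c i ≤ a i := by
  have hp0 : (0:ℚ) < (p:ℚ) := by exact_mod_cast hp.pos
  have hq : ∀ k : ℕ, (0:ℚ) < (p:ℚ) ^ k := fun k => pow_pos hp0 k
  constructor
  · intro hU
    have key : ∀ n (u : Fin r → ℕ), (∑ i, u i) = n →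
        (fun i => (u i : ℚ) / (p : ℚ) ^ e) ∈ U →
        ∃ c : Fin r → ℕ,
          (fun i => (c i : ℚ) / (p : ℚ) ^ e) ∈ U ∧
          (∀ y : Fin r → ℚ,
            (∃ (b : Fin r → ℕ) (e' : ℕ), ∀ i, y i = (b i : ℚ) / (p : ℚ) ^ e') →
            y ≤ (fun i => (c i : ℚ) / (p : ℚ) ^ e) →
            y ≠ (fun i => (c i : ℚ) / (p : ℚ) ^ e) → y ∉ U) ∧
          ∀ i, c i ≤ u i := by
      intro n
      induction n using Nat.strong_induction_on with
      | _ n ih =>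
        intro u hsum huU
        by_cases hex : ∃ s, 0 < u s ∧
            (fun i => ((u i : ℚ) - if i = s then 1 else 0) / (p : ℚ) ^ e) ∈ U
        · obtain ⟨s, hs, hU'⟩ := hex
          set u' : Fin r → ℕ := fun i => u i - (if i = s then 1 else 0) with hu'
          have hform : (fun i => ((u i : ℚ) - if i = s then 1 else 0) / (p : ℚ) ^ e)
              = (fun i => (u' i : ℚ) / (p : ℚ) ^ e) := by
            funext i
            simp only [hu']
            by_cases h : i = s <;> simp [h, Nat.cast_sub hs]
          have hlt : ∑ i, u' i < n := by
            rw [← hsum]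
            apply Finset.sum_lt_sum
            · intro i _
              exact Nat.sub_le _ _
            · exact ⟨s, Finset.mem_univ s, by simp [hu']; omega⟩
          obtain ⟨c, h1, h2, h3⟩ := ih _ hlt u' rfl (hform ▸ hU')
          exact ⟨c, h1, h2, fun i => (h3 i).trans (Nat.sub_le _ _)⟩
        · push_neg at hex
          refine ⟨u, huU, ?_, fun i => le_rfl⟩
          rintro y ⟨b, e', hy⟩ hle hne hyU
          obtain ⟨s, hs⟩ := Function.ne_iff.mp hne
          have hys : y s < (u s : ℚ) / (p : ℚ) ^ e := lt_of_le_of_ne (hle s) hs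
          have hy0 : (0:ℚ) ≤ y s := by
            rw [hy s]; positivity
          have hus : 0 < u s := by
            by_contra h
            push_neg at h
            have h' : u s = 0 := Nat.le_zero.mp h
            rw [h'] at hys
            simp at hys
            linarith
          have hX : ∀ k : ℕ,
              (fun i => (u i : ℚ) / (p : ℚ) ^ e
                - if i = s then 1 / (p : ℚ) ^ (e + k) else 0) ∉ U := by
            intro k
            induction k with
            | zero =>
              have h0 := hex s hus
              intro hc
              apply h0
              convert hc using 2 with i
              by_cases h : i = s <;> simp [h] <;> ring
            | succ k ihk =>
              have hpos : 0 < u s * p ^ k := Nat.mul_pos hus (Nat.pow_pos hp.pos)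
              have hin : (fun i => ((u i * p ^ k : ℕ) : ℚ) / (p : ℚ) ^ (e + k)) ∈ U := by
                convert huU using 2 with i
                push_cast
                rw [pow_add]
                field_simp
              have hnot : (fun i => (((u i * p ^ k : ℕ) : ℚ) - if i = s then 1 else 0)
                  / (p : ℚ) ^ (e + k)) ∉ U := by
                intro hc
                apply ihk
                convert hc using 2 with i
                by_cases h : i = s
                · push_cast [h, pow_add]; simp only [if_true]; field_simp <;> ring
                · push_cast [h, pow_add] <;> field_simp <;> ring
              have := hgap (fun i => u i * p ^ k) (e + k) s hpos hin hnot
              intro hc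
              apply this
              convert hc using 2 with i
              by_cases h : i = s <;> push_cast [h, pow_add] <;> field_simp <;> ring
          -- now derive a contradiction
          set e'' := max e e' with he''
          set k := e'' - e with hk
          have hek : e + k = e'' := by omega
          have hstep : y s ≤ (u s : ℚ) / (p : ℚ) ^ e - 1 / (p : ℚ) ^ (e + k) := by
            have h1 : y s = ((b s * p ^ (e'' - e') : ℕ) : ℚ) / (p : ℚ) ^ e'' := by
              rw [hy s]
              push_cast
              have : e'' = e' + (e'' - e') := by omega
              rw [this, pow_add]
              field_simp
              rw [Nat.add_sub_cancel_left]
            have h2 : (u s : ℚ) / (p : ℚ) ^ e = ((u s * p ^ k : ℕ) : ℚ) / (p : ℚ) ^ e'' := by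
              push_cast
              rw [← hek, pow_add]
              field_simp
            have hlt' : ((b s * p ^ (e'' - e') : ℕ) : ℚ) < ((u s * p ^ k : ℕ) : ℚ) := by
              rw [h1, h2] at hys
              exact (div_lt_div_iff_of_pos_right (hq e'')).mp hys
            have hlt'' : b s * p ^ (e'' - e') + 1 ≤ u s * p ^ k := by
              exact_mod_cast hlt'
            rw [h1, h2, hek]
            rw [div_sub_div_same, div_le_div_iff_of_pos_right (hq e'')]
            have : ((b s * p ^ (e'' - e') : ℕ) : ℚ) + 1 ≤ ((u s * p ^ k : ℕ) : ℚ) := by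
              exact_mod_cast hlt''
            linarith
          have hleX : y ≤ (fun i => (u i : ℚ) / (p : ℚ) ^ e
              - if i = s then 1 / (p : ℚ) ^ (e + k) else 0) := by
            intro i
            by_cases h : i = s
            · subst h; simpa using hstep
            · simpa [h] using hle i
          have hXform : ∃ (c : Fin r → ℕ) (e0 : ℕ), ∀ i,
              (u i : ℚ) / (p : ℚ) ^ e - (if i = s then 1 / (p : ℚ) ^ (e + k) else 0)
                = (c i : ℚ) / (p : ℚ) ^ (e + k) := by
            refine ⟨fun i => u i * p ^ k - (if i = s then 1 else 0), e + k, fun i => ?_⟩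
            by_cases h : i = s
            · simp only [h, if_pos]
              have h1 : 1 ≤ u s * p ^ k := Nat.mul_pos hus (Nat.pow_pos hp.pos)
              rw [Nat.cast_sub h1]
              push_cast
              rw [pow_add]
              field_simp
            · simp only [h, if_neg, if_false, Nat.sub_zero]
              push_cast
              rw [pow_add]
              field_simp
              ring
          obtain ⟨c0, e0, hc0⟩ := hXform
          exact hX k (hup y hyU _ ⟨c0, e + k, hc0⟩ hleX)
    exact key (∑ i, a i) a rfl hU
  · rintro ⟨c, hcU, -, hca⟩
    refine hup _ hcU _ ⟨a, e, fun i => rfl⟩ fun i => ?_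
    have : (c i : ℚ) ≤ (a i : ℚ) := by exact_mod_cast hca i
    exact div_le_div_of_nonneg_right this (hq e).le
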